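/- Let 2r ≥ n + g(d+1), n ≥ r, and let the data x_1,…,x_n ∈ ℝ^d be in general position. Let α > 0 be the minimum, over all (d+1)-element subsets E of {x_1,…,x_n}, of the smallest eigenvalue of the SSP matrix W_E. Then for every family y_1,…,y_n ∈ ℝ^d differing from x_1,…,x_n in at most n−r+g−1 indices, and for every configuration R over an r-element subset of {1,…,n} (for the data y_1,…,y_n), the pooled SSP matrix satisfies v^T W_R v ≥ α·||v||² for every v ∈ ℝ^d, i.e., every eigenvalue of W_R is at least α. -/

import Mathlib

open Matrix Finset Real

/-- The sample mean of the points `x i`, `i ∈ S`; a fixed a-priori vector `dflt` if `S = ∅`. -/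
noncomputable def clusterMean {n d : ℕ} (x : Fin n → Fin d → ℝ) (dflt : Fin d → ℝ)
    (S : Finset (Fin n)) : Fin d → ℝ :=
  if S.Nonempty then (S.card : ℝ)⁻¹ • ∑ i ∈ S, x i else dflt

/-- The pooled (within-groups) SSP matrix of the configuration `C` for the data `x`:
`W = Σ_j Σ_{i ∈ C j} (x i − m_j)(x i − m_j)ᵀ`, where `m_j` is the sample mean of cluster `j`. -/
noncomputable def pooledSSP {n d g : ℕ} (x : Fin n → Fin d → ℝ) (dflt : Fin g → Fin d → ℝ)
    (C : Fin g → Finset (Fin n)) : Matrix (Fin d) (Fin d) ℝ :=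
  ∑ j, ∑ i ∈ C j, Matrix.vecMulVec (x i - clusterMean x (dflt j) (C j))
    (x i - clusterMean x (dflt j) (C j))

/-- A configuration over an `r`-element subset of `{1,…,n}`: a family of `g` pairwise
disjoint (possibly empty) clusters whose union has exactly `r` elements. -/
def IsConfig {n g : ℕ} (r : ℕ) (C : Fin g → Finset (Fin n)) : Prop :=
  (∀ j k : Fin g, j ≠ k → Disjoint (C j) (C k)) ∧ (Finset.univ.biUnion C).card = r

/-- A family of points of `ℝ^d` is in general position if any `d+1` of them are affinely
independent. -/
def InGeneralPosition {n d : ℕ} (x : Fin n → Fin d → ℝ) : Prop :=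
  ∀ s : Finset (Fin n), s.card = d + 1 → AffineIndependent ℝ (fun i : s => x (i : Fin n))

/-- The SSP matrix of the sub-family `(x i)_{i ∈ E}` about its sample mean. -/
noncomputable def sspOf {n d : ℕ} (x : Fin n → Fin d → ℝ) (E : Finset (Fin n)) :
    Matrix (Fin d) (Fin d) ℝ :=
  ∑ i ∈ E, Matrix.vecMulVec (x i - (E.card : ℝ)⁻¹ • ∑ k ∈ E, x k)
    (x i - (E.card : ℝ)⁻¹ • ∑ k ∈ E, x k)


section Aux

open Matrix Finset

private lemma quad_vecMulVec {d : ℕ} (w v : Fin d → ℝ) :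
    v ⬝ᵥ (vecMulVec w w *ᵥ v) = (w ⬝ᵥ v)^2 := by
  simp only [Matrix.mulVec, dotProduct, Matrix.vecMulVec_apply, Finset.mul_sum,
    Finset.sum_mul, pow_two]
  rw [Finset.sum_comm]
  exact Finset.sum_congr rfl fun i _ => Finset.sum_congr rfl fun j _ => by ring

private lemma dot_sum_mulVec {d : ℕ} {ι : Type*} (s : Finset ι)
    (M : ι → Matrix (Fin d) (Fin d) ℝ) (v : Fin d → ℝ) :
    v ⬝ᵥ ((∑ i ∈ s, M i) *ᵥ v) = ∑ i ∈ s, v ⬝ᵥ (M i *ᵥ v) := by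
  induction s using Finset.cons_induction with
  | empty => simp [Matrix.mulVec, dotProduct]
  | cons a s ha ih =>
    rw [Finset.sum_cons, Matrix.add_mulVec, dotProduct_add, ih, Finset.sum_cons]

private lemma quad_sum {d : ℕ} {ι : Type*} (s : Finset ι) (w : ι → Fin d → ℝ) (v : Fin d → ℝ) :
    v ⬝ᵥ ((∑ i ∈ s, vecMulVec (w i) (w i)) *ᵥ v) = ∑ i ∈ s, (w i ⬝ᵥ v)^2 := by
  rw [dot_sum_mulVec]
  exact Finset.sum_congr rfl fun i _ => quad_vecMulVec _ _

private lemma sum_dot {d : ℕ} {ι : Type*} (s : Finset ι) (w : ι → Fin d → ℝ) (v : Fin d → ℝ) :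
    (∑ i ∈ s, w i) ⬝ᵥ v = ∑ i ∈ s, w i ⬝ᵥ v := by
  induction s using Finset.cons_induction with
  | empty => simp [dotProduct]
  | cons a s ha ih => rw [Finset.sum_cons, add_dotProduct, ih, Finset.sum_cons]

private lemma var_min {ι : Type*} (E : Finset ι) (hE : E.Nonempty) (a : ι → ℝ) (c : ℝ) :
    ∑ i ∈ E, (a i - (E.card : ℝ)⁻¹ * ∑ k ∈ E, a k)^2 ≤ ∑ i ∈ E, (a i - c)^2 := by
  set m : ℝ := (E.card : ℝ)⁻¹ * ∑ k ∈ E, a k with hm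
  have hcard : (E.card : ℝ) ≠ 0 := by
    exact_mod_cast Finset.card_ne_zero_of_mem hE.choose_spec
  have h0 : ∑ i ∈ E, (a i - m) = 0 := by
    rw [Finset.sum_sub_distrib, Finset.sum_const, nsmul_eq_mul, hm]
    field_simp
    ring
  have key : ∀ i ∈ E, (a i - c)^2 = (a i - m)^2 + (2*(m - c))*(a i - m) + (m - c)^2 :=
    fun i _ => by ring
  rw [Finset.sum_congr rfl key, Finset.sum_add_distrib, Finset.sum_add_distrib,
    ← Finset.mul_sum, h0, mul_zero, add_zero, Finset.sum_const, nsmul_eq_mul]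
  nlinarith [sq_nonneg (m - c), (Nat.cast_pos (α := ℝ)).mpr hE.card_pos]

private lemma ssp_quad_pos {n d : ℕ} (hd : 0 < d) (x : Fin n → Fin d → ℝ)
    (E : Finset (Fin n)) (hE : E.card = d + 1)
    (hAI : AffineIndependent ℝ (fun i : E => x (i : Fin n)))
    (v : Fin d → ℝ) (hv : v ≠ 0) : 0 < v ⬝ᵥ (sspOf x E *ᵥ v) := by
  have hEne : E.Nonempty := Finset.card_pos.mp (by omega)
  rw [sspOf, quad_sum]
  set m : Fin d → ℝ := (E.card : ℝ)⁻¹ • ∑ k ∈ E, x k with hmdef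
  have hnn : (0:ℝ) ≤ ∑ i ∈ E, ((x i - m) ⬝ᵥ v)^2 := Finset.sum_nonneg fun i _ => sq_nonneg _
  rcases hnn.lt_or_eq with h | h
  · exact h
  exfalso
  have hall : ∀ i ∈ E, ((x i - m) ⬝ᵥ v)^2 = 0 :=
    (Finset.sum_eq_zero_iff_of_nonneg fun i _ => sq_nonneg _).mp h.symm
  have hconst : ∀ i ∈ E, x i ⬝ᵥ v = m ⬝ᵥ v := by
    intro i hi
    have h1 : (x i - m) ⬝ᵥ v = 0 := sq_eq_zero_iff.mp (hall i hi)
    rw [sub_dotProduct] at h1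
    linarith
  obtain ⟨i0, hi0⟩ := hEne
  set i0' : E := ⟨i0, hi0⟩ with hi0'
  have li := (affineIndependent_iff_linearIndependent_vsub ℝ
    (fun i : E => x (i : Fin n)) i0').mp hAI
  have hcardsub : Fintype.card {j : E // j ≠ i0'} = d := by
    have h1 : Fintype.card {j : E // j ≠ i0'} = Fintype.card E - 1 := by
      simp [ne_eq, Fintype.card_subtype_compl, Fintype.card_subtype_eq]
    rw [h1, Fintype.card_coe, hE]
    omega
  haveI : Nonempty {j : E // j ≠ i0'} := Fintype.card_pos_iff.mp (by omega)
  have hspan := li.span_eq_top_of_card_eq_finrank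
    (by rw [hcardsub, Module.finrank_fin_fun])
  have hvmem : v ∈ Submodule.span ℝ
      (Set.range fun i : {j : E // j ≠ i0'} => x ((i : E) : Fin n) -ᵥ x (i0' : Fin n)) := by
    rw [hspan]; trivial
  have hzero : v ⬝ᵥ v = 0 := by
    refine Submodule.span_induction (p := fun z _ => z ⬝ᵥ v = 0) ?_ ?_ ?_ ?_ hvmem
    · rintro z ⟨i, rfl⟩
      show (x ((i : E) : Fin n) -ᵥ x (i0' : Fin n)) ⬝ᵥ v = 0
      rw [vsub_eq_sub, sub_dotProduct, hconst _ (i : E).2, hconst _ hi0, sub_self]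
    · exact zero_dotProduct v
    · intro a b _ _ ha hb; rw [add_dotProduct, ha, hb, add_zero]
    · intro a z _ hz; rw [smul_dotProduct, hz, smul_zero]
  exact hv (dotProduct_self_eq_zero.mp hzero)

private lemma exists_pos_lb {n d : ℕ} (hd : 0 < d) (x : Fin n → Fin d → ℝ)
    (E : Finset (Fin n)) (hE : E.card = d + 1)
    (hAI : AffineIndependent ℝ (fun i : E => x (i : Fin n))) :
    ∃ b : ℝ, 0 < b ∧ ∀ v : Fin d → ℝ, v ⬝ᵥ v = 1 → b ≤ v ⬝ᵥ (sspOf x E *ᵥ v) := by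
  set S : Set (Fin d → ℝ) := {v | v ⬝ᵥ v = 1} with hS
  have hcont1 : Continuous fun v : Fin d → ℝ => v ⬝ᵥ v := by
    simp only [dotProduct]
    exact continuous_finset_sum _ fun i _ => (continuous_apply i).mul (continuous_apply i)
  have hcont2 : Continuous fun v : Fin d → ℝ => v ⬝ᵥ (sspOf x E *ᵥ v) := by
    simp only [dotProduct, Matrix.mulVec]
    exact continuous_finset_sum _ fun i _ => (continuous_apply i).mul
      (continuous_finset_sum _ fun k _ => continuous_const.mul (continuous_apply k))
  have hclosed : IsClosed S := isClosed_eq hcont1 continuous_const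
  have hbdd : Bornology.IsBounded S := by
    refine (Metric.isBounded_closedBall (x := (0 : Fin d → ℝ)) (r := 1)).subset ?_
    intro v hv
    simp only [Metric.mem_closedBall, dist_zero_right]
    rw [pi_norm_le_iff_of_nonneg zero_le_one]
    intro i
    have h1 : v i * v i ≤ 1 := by
      have h2 : v i * v i ≤ ∑ x : Fin d, v x * v x := Finset.single_le_sum
        (f := fun k => v k * v k) (fun k _ => mul_self_nonneg _) (Finset.mem_univ i)
      have h3 : ∑ k, v k * v k = 1 := hv
      linarith
    rw [Real.norm_eq_abs]
    exact abs_le_one_iff_mul_self_le_one.mpr h1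
  have hcpt : IsCompact S := Metric.isCompact_of_isClosed_isBounded hclosed hbdd
  have hne : S.Nonempty := by
    have h1 : (Pi.single (⟨0, hd⟩ : Fin d) (1:ℝ)) ⬝ᵥ (Pi.single (⟨0, hd⟩ : Fin d) (1:ℝ)) = 1 := by
      simp [dotProduct, Pi.single_apply]
    exact ⟨_, h1⟩
  obtain ⟨v0, hv0S, hmin⟩ := hcpt.exists_isMinOn hne hcont2.continuousOn
  have hv0 : v0 ≠ 0 := by
    intro h0
    have : (0 : Fin d → ℝ) ⬝ᵥ (0 : Fin d → ℝ) = 1 := h0 ▸ hv0S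
    rw [zero_dotProduct] at this
    norm_num at this
  exact ⟨_, ssp_quad_pos hd x E hE hAI v0 hv0, fun v hv => isMinOn_iff.mp hmin v hv⟩

private lemma quad_scale {d : ℕ} (M : Matrix (Fin d) (Fin d) ℝ) (a : ℝ)
    (h : ∀ u : Fin d → ℝ, u ⬝ᵥ u = 1 → a ≤ u ⬝ᵥ (M *ᵥ u)) (v : Fin d → ℝ) :
    a * (v ⬝ᵥ v) ≤ v ⬝ᵥ (M *ᵥ v) := by
  by_cases hv : v = 0
  · simp [hv]
  · have hc0 : (0:ℝ) ≤ v ⬝ᵥ v := Finset.sum_nonneg fun i _ => mul_self_nonneg _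
    have hc : 0 < v ⬝ᵥ v :=
      lt_of_le_of_ne hc0 fun hcc => hv (dotProduct_self_eq_zero.mp hcc.symm)
    set c : ℝ := v ⬝ᵥ v with hcdef
    have hs : 0 < Real.sqrt c := Real.sqrt_pos.mpr hc
    have hss : Real.sqrt c * Real.sqrt c = c := Real.mul_self_sqrt hc.le
    set u : Fin d → ℝ := (Real.sqrt c)⁻¹ • v with hu
    have huu : u ⬝ᵥ u = 1 := by
      rw [hu, smul_dotProduct, dotProduct_smul, smul_eq_mul, smul_eq_mul,
        ← hcdef, ← mul_assoc]
      field_simp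
      rw [pow_two, hss]
    have h2 := h u huu
    have h3 : u ⬝ᵥ (M *ᵥ u) = c⁻¹ * (v ⬝ᵥ (M *ᵥ v)) := by
      rw [hu, Matrix.mulVec_smul, smul_dotProduct, dotProduct_smul,
        smul_eq_mul, smul_eq_mul, ← mul_assoc, ← mul_inv, hss]
    rw [h3] at h2
    rw [mul_comm]
    calc c * a ≤ c * (c⁻¹ * (v ⬝ᵥ (M *ᵥ v))) := by
          exact mul_le_mul_of_nonneg_left h2 hc.le
      _ = v ⬝ᵥ (M *ᵥ v) := by field_simp

end Aux

/-- Theorem 4.3(a) of the paper.  Suppose `2r ≥ n + g(d+1)` and the data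
are in general position.  Let `α` be the minimum, over all `(d+1)`-element subsets `E`, of
the smallest eigenvalue of `W_E` (characterized here as the greatest lower bound of the
Rayleigh quotients `vᵀ W_E v` over unit vectors `v`).  Then `α > 0` and, for every family
differing from the data in at most `n − r + g − 1` indices, the pooled SSP matrix of every
configuration satisfies `vᵀ W v ≥ α‖v‖²`, i.e. all its eigenvalues are at least `α`. -/
theorem tdc_ssp_eigenvalues_bounded_below {n d g r : ℕ} (hd : 0 < d) (hg : 0 < g)
    (h2r : n + g * (d + 1) ≤ 2 * r) (hn : r ≤ n)
    (x : Fin n → Fin d → ℝ) (hx : InGeneralPosition x) (dflt : Fin g → Fin d → ℝ)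
    (α : ℝ)
    (hα : IsGLB {t : ℝ | ∃ (E : Finset (Fin n)) (v : Fin d → ℝ),
        E.card = d + 1 ∧ v ⬝ᵥ v = 1 ∧ t = v ⬝ᵥ (sspOf x E *ᵥ v)} α) :
    0 < α ∧
    ∀ y : Fin n → Fin d → ℝ,
      (Finset.univ.filter (fun i => y i ≠ x i)).card ≤ n - r + g - 1 →
      ∀ C : Fin g → Finset (Fin n), IsConfig r C →
        ∀ v : Fin d → ℝ, α * (v ⬝ᵥ v) ≤ v ⬝ᵥ (pooledSSP y dflt C *ᵥ v) := by
  classical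
  have hd1n : d + 1 ≤ n := by
    have h1 : d + 1 ≤ g * (d + 1) := Nat.le_mul_of_pos_left _ hg
    omega
  have hkey : ∀ E : Finset (Fin n), E.card = d + 1 →
      ∀ v : Fin d → ℝ, α * (v ⬝ᵥ v) ≤ v ⬝ᵥ (sspOf x E *ᵥ v) := by
    intro E hE v
    exact quad_scale _ _ (fun u hu => hα.1 ⟨E, u, hE, hu, rfl⟩) v
  constructor
  · set 𝔈 := (Finset.univ : Finset (Fin n)).powersetCard (d + 1) with h𝔈
    have h𝔈ne : 𝔈.Nonempty := Finset.powersetCard_nonempty.mpr (by simpa using hd1n)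
    have hEex : ∀ E ∈ 𝔈, ∃ b : ℝ, 0 < b ∧
        ∀ v : Fin d → ℝ, v ⬝ᵥ v = 1 → b ≤ v ⬝ᵥ (sspOf x E *ᵥ v) := by
      intro E hEm
      have hc : E.card = d + 1 := (Finset.mem_powersetCard.mp hEm).2
      exact exists_pos_lb hd x E hc (hx E hc)
    choose b hbpos hble using hEex
    have hattne : 𝔈.attach.Nonempty := Finset.attach_nonempty_iff.mpr h𝔈ne
    set β := 𝔈.attach.inf' hattne (fun E => b E.1 E.2) with hβ
    have hβpos : 0 < β := (Finset.lt_inf'_iff hattne).mpr fun E _ => hbpos E.1 E.2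
    have hlb : β ∈ lowerBounds {t : ℝ | ∃ (E : Finset (Fin n)) (v : Fin d → ℝ),
        E.card = d + 1 ∧ v ⬝ᵥ v = 1 ∧ t = v ⬝ᵥ (sspOf x E *ᵥ v)} := by
      rintro t ⟨E, v, hE1, hv1, rfl⟩
      have hEm : E ∈ 𝔈 := Finset.mem_powersetCard.mpr ⟨Finset.subset_univ _, hE1⟩
      exact le_trans (Finset.inf'_le _ (Finset.mem_attach _ ⟨E, hEm⟩)) (hble E hEm v hv1)
    exact lt_of_lt_of_le hβpos (hα.2 hlb)
  · intro y hy C hC v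
    obtain ⟨hdisj, hcard⟩ := hC
    set B := Finset.univ.filter (fun i => y i ≠ x i) with hB
    have hsum : ∑ j, (C j).card = r := by
      rw [← hcard]
      exact (Finset.card_biUnion (fun j _ k _ hjk => hdisj j k hjk)).symm
    have hinter : ∑ j, (C j ∩ B).card ≤ B.card := by
      rw [← Finset.card_biUnion (fun j _ k _ hjk => (hdisj j k hjk).mono
        Finset.inter_subset_left Finset.inter_subset_left)]
      exact Finset.card_le_card (Finset.biUnion_subset.mpr fun j _ => Finset.inter_subset_right)
    have htot : g * d + 1 ≤ ∑ j, (C j \ B).card := by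
      have h1 : ∑ j, ((C j ∩ B).card + (C j \ B).card) = r := by
        rw [Finset.sum_congr rfl fun j _ => Finset.card_inter_add_card_sdiff (C j) B, hsum]
      rw [Finset.sum_add_distrib] at h1
      have h2 : B.card ≤ n - r + g - 1 := hy
      have h3 : d + 1 ≤ g * (d + 1) := Nat.le_mul_of_pos_left _ hg
      have h4 : g * (d + 1) = g * d + g := by ring
      omega
    have hpig : ∃ j, d + 1 ≤ (C j \ B).card := by
      by_contra hcon
      push_neg at hcon
      have h5 : ∑ j, (C j \ B).card ≤ (Finset.univ : Finset (Fin g)).card • d :=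
        Finset.sum_le_card_nsmul _ _ _ fun j _ => by have := hcon j; omega
      rw [Finset.card_univ, Fintype.card_fin, smul_eq_mul] at h5
      omega
    obtain ⟨j0, hj0⟩ := hpig
    obtain ⟨E, hEsub, hEcard⟩ := Finset.exists_subset_card_eq hj0
    have hEC : E ⊆ C j0 := hEsub.trans (Finset.sdiff_subset)
    have hExy : ∀ i ∈ E, y i = x i := by
      intro i hi
      have h5 := hEsub hi
      rw [Finset.mem_sdiff] at h5
      have h6 := h5.2
      rw [hB] at h6
      simp only [Finset.mem_filter, Finset.mem_univ, true_and, not_not] at h6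
      exact h6
    have hEne : E.Nonempty := Finset.card_pos.mp (by omega)
    set m : Fin d → ℝ := clusterMean y (dflt j0) (C j0) with hm
    have hQ : v ⬝ᵥ (pooledSSP y dflt C *ᵥ v)
        = ∑ j, ∑ i ∈ C j, ((y i - clusterMean y (dflt j) (C j)) ⬝ᵥ v)^2 := by
      rw [pooledSSP, dot_sum_mulVec]
      exact Finset.sum_congr rfl fun j _ => quad_sum _ _ _
    rw [hQ]
    have step1 : ∑ i ∈ C j0, ((y i - m) ⬝ᵥ v)^2
        ≤ ∑ j, ∑ i ∈ C j, ((y i - clusterMean y (dflt j) (C j)) ⬝ᵥ v)^2 :=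
      Finset.single_le_sum
        (f := fun j => ∑ i ∈ C j, ((y i - clusterMean y (dflt j) (C j)) ⬝ᵥ v)^2)
        (fun j _ => Finset.sum_nonneg fun i _ => sq_nonneg _) (Finset.mem_univ j0)
    have step2 : ∑ i ∈ E, ((x i - m) ⬝ᵥ v)^2 ≤ ∑ i ∈ C j0, ((y i - m) ⬝ᵥ v)^2 := by
      have h6 : ∑ i ∈ E, ((x i - m) ⬝ᵥ v)^2 = ∑ i ∈ E, ((y i - m) ⬝ᵥ v)^2 :=
        Finset.sum_congr rfl fun i hi => by rw [hExy i hi]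
      rw [h6]
      exact Finset.sum_le_sum_of_subset_of_nonneg hEC fun i _ _ => sq_nonneg _
    have step3 : v ⬝ᵥ (sspOf x E *ᵥ v) ≤ ∑ i ∈ E, ((x i - m) ⬝ᵥ v)^2 := by
      rw [sspOf, quad_sum]
      have hL : ∀ i ∈ E, ((x i - (E.card : ℝ)⁻¹ • ∑ k ∈ E, x k) ⬝ᵥ v)^2
          = ((x i ⬝ᵥ v) - (E.card : ℝ)⁻¹ * ∑ k ∈ E, (x k ⬝ᵥ v))^2 := by
        intro i _
        rw [sub_dotProduct, smul_dotProduct, sum_dot, smul_eq_mul]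
      have hR : ∀ i ∈ E, ((x i - m) ⬝ᵥ v)^2 = ((x i ⬝ᵥ v) - m ⬝ᵥ v)^2 := fun i _ => by
        rw [sub_dotProduct]
      rw [Finset.sum_congr rfl hL, Finset.sum_congr rfl hR]
      exact var_min E hEne (fun i => x i ⬝ᵥ v) (m ⬝ᵥ v)
    have step4 : α * (v ⬝ᵥ v) ≤ v ⬝ᵥ (sspOf x E *ᵥ v) := hkey E hEcard v
    linarith
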